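/- Path-quantifier elimination is sound and complete: for a system model M with n elements, there exists a path π in M from element e to element e' (acyclic, of length k ≤ n-1 connectors) if and only if there exist connectors c₁,...,c_k ∈ C with src(c₁) = e, tgt(c_k) = e', tgt(c_{i-1}) = src(c_i) for 1 < i ≤ k, and tgt(c_i) ≠ src(c_j) for all 1 ≤ j ≤ i ≤ k. -/

import Mathlib

/-- The element sequence of a path encoded by its connectors:
`src c₀, tgt c₀, tgt c₁, ..., tgt c_k`. -/
def elemSeq {C E : Type*} (src tgt : C → E) {k : ℕ} (c : Fin (k + 1) → C) :
    Fin (k + 2) → E :=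
  fun i => Fin.cases (src (c 0)) (fun j => tgt (c j)) i

lemma elemSeq_zero {C E : Type*} (src tgt : C → E) {k : ℕ} (c : Fin (k + 1) → C) :
    elemSeq src tgt c 0 = src (c 0) := by simp [elemSeq]

lemma elemSeq_succ {C E : Type*} (src tgt : C → E) {k : ℕ} (c : Fin (k + 1) → C)
    (j : Fin (k + 1)) : elemSeq src tgt c j.succ = tgt (c j) := by simp [elemSeq]

lemma elemSeq_src {C E : Type*} (src tgt : C → E) {k : ℕ} (c : Fin (k + 1) → C)
    (hchain : ∀ i : Fin k, tgt (c i.castSucc) = src (c i.succ)) (j : Fin (k + 1)) :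
    src (c j) = elemSeq src tgt c j.castSucc := by
  induction j using Fin.cases with
  | zero => simp [elemSeq]
  | succ i =>
    rw [← Fin.succ_castSucc, elemSeq_succ, hchain]

/-- Path-quantifier elimination is sound and complete: there is an acyclic
path from `e` to `e'` iff there is a chained connector sequence of length at
most `n - 1` satisfying the inequality side conditions (3) and (4) of the
translation `T(∃p.φ)`. -/
theorem stmt13 {C E : Type*} [Fintype E] (src tgt : C → E) (e e' : E) :
    (∃ (k : ℕ) (c : Fin (k + 1) → C),
        (∀ i : Fin k, tgt (c i.castSucc) = src (c i.succ)) ∧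
        Function.Injective (elemSeq src tgt c) ∧
        src (c 0) = e ∧ tgt (c (Fin.last k)) = e')
    ↔ (∃ (k : ℕ) (c : Fin (k + 1) → C),
        k + 1 ≤ Fintype.card E - 1 ∧
        (∀ i : Fin k, tgt (c i.castSucc) = src (c i.succ)) ∧
        (∀ i j : Fin (k + 1), j ≤ i → tgt (c i) ≠ src (c j)) ∧
        src (c 0) = e ∧ tgt (c (Fin.last k)) = e') := by
  constructor
  · rintro ⟨k, c, hchain, hinj, h0, hlast⟩
    refine ⟨k, c, ?_, hchain, ?_, h0, hlast⟩
    · have hcard : k + 2 ≤ Fintype.card E := by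
        have := Fintype.card_le_of_injective _ hinj
        simpa using this
      omega
    · intro i j hji hne
      rw [elemSeq_src src tgt c hchain, ← elemSeq_succ src tgt c i] at hne
      have h := hinj hne
      have : j.castSucc < i.succ := by
        exact lt_of_le_of_lt (Fin.castSucc_le_castSucc_iff.mpr hji) (Fin.castSucc_lt_succ : i.castSucc < i.succ)
      rw [h] at this
      exact lt_irrefl _ this
  · rintro ⟨k, c, _, hchain, hside, h0, hlast⟩
    refine ⟨k, c, hchain, ?_, h0, hlast⟩
    have key : ∀ a b : Fin (k + 2), a < b → elemSeq src tgt c a ≠ elemSeq src tgt c b := by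
      intro a b hab
      have hb0 : b ≠ 0 := Fin.pos_iff_ne_zero.mp (lt_of_le_of_lt (Fin.zero_le a) hab)
      obtain ⟨i, rfl⟩ := Fin.eq_succ_of_ne_zero hb0
      have ha : a ≠ Fin.last (k + 1) := by
        intro h; rw [h] at hab
        exact absurd (Fin.le_last i.succ) (not_le.mpr hab)
      obtain ⟨j, rfl⟩ := Fin.exists_castSucc_eq.mpr ha
      have hji : j ≤ i := Fin.castSucc_lt_succ_iff.mp hab
      rw [← elemSeq_src src tgt c hchain, elemSeq_succ]
      exact fun h => hside i j hji h.symm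
    intro a b hab
    by_contra hne
    rcases lt_or_gt_of_ne hne with h | h
    · exact key a b h hab
    · exact key b a h hab.symm
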